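/- Let M be an n×n real skew-symmetric matrix. Let p_1, …, p_m be probability vectors on {1,…,n} constructed recursively as follows: with C_k denoting the support of p_k and X_k = {1,…,n} \ (C_1 ∪ ⋯ ∪ C_{k−1}), assume each p_k is supported in X_k and satisfies (M p_k)_i ≤ 0 for every i ∈ X_k (i.e., p_k is a symmetric Nash equilibrium strategy of the game restricted to X_k), as in Nash Clustering. Define NPP(C_i, C_j) = p_iᵀ M p_j. Then NPP(C_i, C_j) ≥ 0 whenever i ≤ j, and NPP(C_i, C_j) ≤ 0 whenever i > j. -/
import Mathlib


open Matrix

lemma npp_nonpos_aux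
    (n m : ℕ) (M : Matrix (Fin n) (Fin n) ℝ)
    (p : Fin m → Fin n → ℝ)
    (hp0 : ∀ k i, 0 ≤ p k i)
    (hsupp : ∀ k : Fin m, ∀ i : Fin n, (∃ l : Fin m, l < k ∧ p l i ≠ 0) → p k i = 0)
    (hNE : ∀ k : Fin m, ∀ i : Fin n, (∀ l : Fin m, l < k → p l i = 0) →
      (M.mulVec (p k)) i ≤ 0)
    {i j : Fin m} (hji : j < i) : p i ⬝ᵥ M.mulVec (p j) ≤ 0 := by
  have : ∀ k : Fin n, p i k * (M.mulVec (p j)) k ≤ 0 := by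
    intro k
    rcases eq_or_ne (p i k) 0 with h | h
    · simp [h]
    · have hMk : (M.mulVec (p j)) k ≤ 0 := by
        apply hNE j k
        intro l hl
        by_contra hlk
        exact h (hsupp i k ⟨l, lt_trans hl hji, hlk⟩)
      exact mul_nonpos_of_nonneg_of_nonpos (hp0 i k) hMk
  calc p i ⬝ᵥ M.mulVec (p j) = ∑ k, p i k * (M.mulVec (p j)) k := rfl
    _ ≤ 0 := Finset.sum_nonpos fun k _ => this k

/-- **Theorem on NPP / Nash Clustering.** Let `M` be skew-symmetric and let
`p 0, …, p (m-1)` be probability vectors produced by Nash Clustering: each `p k` is supported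
in `X k = {1,…,n} \ (C 0 ∪ ⋯ ∪ C (k-1))` (where `C l` is the support of `p l`), and
`(M (p k)) i ≤ 0` for every `i ∈ X k`, i.e. `p k` is a symmetric Nash equilibrium strategy of
the game restricted to `X k`. With `NPP(C i, C j) = (p i)ᵀ M (p j)`, we have
`NPP(C i, C j) ≥ 0` whenever `i ≤ j` and `NPP(C i, C j) ≤ 0` whenever `i > j`. -/
theorem npp_ordering_of_nash_clustering
    (n m : ℕ) (M : Matrix (Fin n) (Fin n) ℝ) (hM : Mᵀ = -M)
    (p : Fin m → Fin n → ℝ)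
    (hp0 : ∀ k i, 0 ≤ p k i) (hp1 : ∀ k, ∑ i, p k i = 1)
    (hsupp : ∀ k : Fin m, ∀ i : Fin n, (∃ l : Fin m, l < k ∧ p l i ≠ 0) → p k i = 0)
    (hNE : ∀ k : Fin m, ∀ i : Fin n, (∀ l : Fin m, l < k → p l i = 0) →
      (M.mulVec (p k)) i ≤ 0) :
    ∀ i j : Fin m,
      (i ≤ j → 0 ≤ p i ⬝ᵥ M.mulVec (p j)) ∧
      (j < i → p i ⬝ᵥ M.mulVec (p j) ≤ 0) := by
  have skew : ∀ u v : Fin n → ℝ, u ⬝ᵥ M.mulVec v = -(v ⬝ᵥ M.mulVec u) := by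
    intro u v
    rw [dotProduct_mulVec, ← mulVec_transpose, hM]
    simp [dotProduct_comm, neg_mulVec]
  intro i j
  constructor
  · intro hij
    rcases eq_or_lt_of_le hij with h | h
    · subst h
      have := skew (p i) (p i)
      linarith
    · have h1 := npp_nonpos_aux n m M p hp0 hsupp hNE h
      have h2 := skew (p i) (p j)
      linarith
  · intro h
    exact npp_nonpos_aux n m M p hp0 hsupp hNE h
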